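/- In the general noisy-response setting, for any σ > 0, any θ, θ' ∈ ℝ^d, and any measurable set A ⊆ E × {0,1}, |D_σ(θ)(A) − D_σ(θ')(A)| ≤ ‖θ − θ'‖₂ / (2σ). In other words, the noisy-response distribution map is (1/(2σ))-Lipschitz in total variation distance. -/

import Mathlib

open MeasureTheory ProbabilityTheory Real Set
open scoped ENNReal NNReal

lemma gpdf_le (hσ : 0 < σ) (μ x : ℝ) :
    gaussianPDFReal μ ⟨σ ^ 2, sq_nonneg σ⟩ x ≤ (2 * σ)⁻¹ := by
  erw [gaussianPDFReal_def]
  have h2 : Real.sqrt (2 * π * σ ^ 2) ≥ 2 * σ := by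
    have hπ : (2:ℝ) ≤ π := by nlinarith [pi_gt_three]
    have : (2*σ)^2 ≤ 2 * π * σ ^ 2 := by nlinarith [sq_nonneg σ]
    calc 2*σ = Real.sqrt ((2*σ)^2) := by rw [Real.sqrt_sq (by positivity)]
    _ ≤ _ := Real.sqrt_le_sqrt this
  have h3 : rexp (-(x - μ) ^ 2 / (2 * (⟨σ ^ 2, sq_nonneg σ⟩ : NNReal))) ≤ 1 := by
    apply Real.exp_le_one_iff.2
    have : ((⟨σ ^ 2, sq_nonneg σ⟩ : NNReal) : ℝ) = σ ^ 2 := rfl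
    rw [this]
    apply div_nonpos_of_nonpos_of_nonneg (by nlinarith [sq_nonneg (x - μ)]) (by positivity)
  have h1 : (0:ℝ) < 2 * σ := by linarith
  calc (Real.sqrt (2 * π * (⟨σ ^ 2, sq_nonneg σ⟩ : NNReal)))⁻¹ *
        rexp (-(x - μ) ^ 2 / (2 * (⟨σ ^ 2, sq_nonneg σ⟩ : NNReal)))
      ≤ (Real.sqrt (2 * π * (⟨σ ^ 2, sq_nonneg σ⟩ : NNReal)))⁻¹ * 1 := by
        apply mul_le_mul_of_nonneg_left h3 (by positivity)
    _ ≤ (2*σ)⁻¹ := by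
        rw [mul_one]
        apply inv_anti₀ h1
        exact h2

lemma gauss_set_toReal (hσ : 0 < σ) (μ : ℝ) (B : Set ℝ) :
    (gaussianReal μ ⟨σ ^ 2, sq_nonneg σ⟩ B).toReal
      = ∫ x in B, gaussianPDFReal μ ⟨σ ^ 2, sq_nonneg σ⟩ x := by
  have hv : (⟨σ ^ 2, sq_nonneg σ⟩ : NNReal) ≠ 0 := by
    simp only [ne_eq, ← NNReal.coe_eq_zero]
    exact ne_of_gt (pow_pos hσ 2)
  rw [gaussianReal_apply_eq_integral μ hv B, ENNReal.toReal_ofReal]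
  exact integral_nonneg fun x => gaussianPDFReal_nonneg _ _ _

lemma gauss_Icc_le (hσ : 0 < σ) {a b : ℝ} (hab : a ≤ b) :
    (gaussianReal 0 ⟨σ ^ 2, sq_nonneg σ⟩ (Icc a b)).toReal ≤ (b - a) * (2 * σ)⁻¹ := by
  rw [gauss_set_toReal hσ]
  calc ∫ x in Icc a b, gaussianPDFReal 0 ⟨σ ^ 2, sq_nonneg σ⟩ x
      ≤ ∫ _x in Icc a b, (2 * σ)⁻¹ := by
        apply setIntegral_mono_on ((integrable_gaussianPDFReal _ _).integrableOn)
          (integrableOn_const measure_Icc_lt_top.ne) measurableSet_Icc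
        exact fun x _ => gpdf_le hσ 0 x
    _ = (b - a) * (2 * σ)⁻¹ := by
        rw [setIntegral_const, Real.volume_real_Icc_of_le hab, smul_eq_mul]

lemma gauss_one_sided (hσ : 0 < σ) (μ₁ μ₂ : ℝ) {B : Set ℝ} (hB : MeasurableSet B) :
    (gaussianReal μ₁ ⟨σ ^ 2, sq_nonneg σ⟩ B).toReal
      - (gaussianReal μ₂ ⟨σ ^ 2, sq_nonneg σ⟩ B).toReal ≤ |μ₁ - μ₂| / (2 * σ) := by
  set v : NNReal := ⟨σ ^ 2, sq_nonneg σ⟩ with hv_def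
  have hvc : (v : ℝ) = σ ^ 2 := rfl
  have hvpos : (0:ℝ) < v := by rw [hvc]; positivity
  set f₁ := gaussianPDFReal μ₁ v with hf₁
  set f₂ := gaussianPDFReal μ₂ v with hf₂
  -- generic step given a good set P
  have main : ∀ P : Set ℝ, MeasurableSet P → (∀ x ∈ P, f₂ x ≤ f₁ x) → (∀ x ∉ P, f₁ x ≤ f₂ x) →
      (gaussianReal μ₁ v B).toReal - (gaussianReal μ₂ v B).toReal
        ≤ (gaussianReal μ₁ v P).toReal - (gaussianReal μ₂ v P).toReal := by
    intro P hP h1 h2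
    rw [gauss_set_toReal hσ, gauss_set_toReal hσ, gauss_set_toReal hσ, gauss_set_toReal hσ]
    have hi₁ := integrable_gaussianPDFReal μ₁ v
    have hi₂ := integrable_gaussianPDFReal μ₂ v
    have hsub : Integrable (fun x => f₁ x - f₂ x) := hi₁.sub hi₂
    rw [← integral_sub hi₁.integrableOn hi₂.integrableOn,
        ← integral_sub hi₁.integrableOn hi₂.integrableOn,
        ← integral_indicator hB, ← integral_indicator hP]
    apply integral_mono (hsub.indicator hB) (hsub.indicator hP)
    intro x
    by_cases hxP : x ∈ P
    · rw [Set.indicator_of_mem hxP]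
      by_cases hxB : x ∈ B
      · rw [Set.indicator_of_mem hxB]
      · rw [Set.indicator_of_notMem hxB]; exact sub_nonneg.2 (h1 x hxP)
    · rw [Set.indicator_of_notMem hxP]
      by_cases hxB : x ∈ B
      · rw [Set.indicator_of_mem hxB]; exact sub_nonpos.2 (h2 x hxP)
      · rw [Set.indicator_of_notMem hxB]
  -- comparison of pdfs
  have hcmp : ∀ μ μ' x : ℝ, (x - μ) ^ 2 ≤ (x - μ') ^ 2 →
      gaussianPDFReal μ' v x ≤ gaussianPDFReal μ v x := by
    intro μ μ' x h
    rw [gaussianPDFReal_def, gaussianPDFReal_def]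
    apply mul_le_mul_of_nonneg_left _ (by positivity)
    apply Real.exp_le_exp.2
    have h2v : (0:ℝ) < 2 * v := by linarith
    exact div_le_div_of_nonneg_right (neg_le_neg h) h2v.le
  have hv : v ≠ 0 := by
    simp only [v, ne_eq, ← NNReal.coe_eq_zero]
    exact ne_of_gt (pow_pos hσ 2)
  have htransIic : ∀ μ m : ℝ, gaussianReal μ v (Iic m) = gaussianReal 0 v (Iic (m - μ)) := by
    intro μ m
    have h := gaussianReal_map_add_const (μ := 0) (v := v) μ
    rw [zero_add] at h
    rw [← h, Measure.map_apply (measurable_add_const μ) measurableSet_Iic]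
    congr 1
    ext x
    simp [le_sub_iff_add_le]
  have htransIci : ∀ μ m : ℝ, gaussianReal μ v (Ici m) = gaussianReal 0 v (Ici (m - μ)) := by
    intro μ m
    have h := gaussianReal_map_add_const (μ := 0) (v := v) μ
    rw [zero_add] at h
    rw [← h, Measure.map_apply (measurable_add_const μ) measurableSet_Ici]
    congr 1
    ext x
    simp [sub_le_iff_le_add]
  have hfin : ∀ (μ : ℝ) (S : Set ℝ), gaussianReal μ v S ≠ ⊤ := fun μ S => measure_ne_top _ _
  have hdiffIic : ∀ a b : ℝ, a ≤ b →
      (gaussianReal 0 v (Iic b)).toReal - (gaussianReal 0 v (Iic a)).toReal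
        ≤ (b - a) * (2 * σ)⁻¹ := by
    intro a b hab
    have hsub : Iic b ⊆ Iic a ∪ Icc a b := by
      intro x hx
      rcases le_or_gt x a with h | h
      · exact Or.inl h
      · exact Or.inr ⟨h.le, hx⟩
    have h1 : gaussianReal 0 v (Iic b) ≤ gaussianReal 0 v (Iic a) + gaussianReal 0 v (Icc a b) :=
      le_trans (measure_mono hsub) (measure_union_le _ _)
    have h2 := ENNReal.toReal_mono (by simp [hfin]) h1
    rw [ENNReal.toReal_add (hfin _ _) (hfin _ _)] at h2
    have := gauss_Icc_le hσ hab
    linarith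
  have hdiffIci : ∀ a b : ℝ, a ≤ b →
      (gaussianReal 0 v (Ici a)).toReal - (gaussianReal 0 v (Ici b)).toReal
        ≤ (b - a) * (2 * σ)⁻¹ := by
    intro a b hab
    have hsub : Ici a ⊆ Ici b ∪ Icc a b := by
      intro x hx
      rcases le_or_gt b x with h | h
      · exact Or.inl h
      · exact Or.inr ⟨hx, h.le⟩
    have h1 : gaussianReal 0 v (Ici a) ≤ gaussianReal 0 v (Ici b) + gaussianReal 0 v (Icc a b) :=
      le_trans (measure_mono hsub) (measure_union_le _ _)
    have h2 := ENNReal.toReal_mono (by simp [hfin]) h1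
    rw [ENNReal.toReal_add (hfin _ _) (hfin _ _)] at h2
    have := gauss_Icc_le hσ hab
    linarith
  rcases lt_trichotomy μ₁ μ₂ with hlt | heq | hgt
  · set m := (μ₁ + μ₂) / 2 with hm
    have step := main (Iic m) measurableSet_Iic
      (fun x hx => hcmp μ₁ μ₂ x (by simp only [mem_Iic] at hx; nlinarith))
      (fun x hx => hcmp μ₂ μ₁ x (by simp only [mem_Iic, not_le] at hx; nlinarith))
    rw [htransIic μ₁ m, htransIic μ₂ m] at step
    have hd := hdiffIic (m - μ₂) (m - μ₁) (by linarith)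
    have habs : |μ₁ - μ₂| = μ₂ - μ₁ := by rw [abs_of_nonpos (by linarith)]; ring
    rw [habs, div_eq_mul_inv]
    have : m - μ₁ - (m - μ₂) = μ₂ - μ₁ := by ring
    rw [this] at hd
    linarith
  · rw [heq, sub_self]
    exact div_nonneg (abs_nonneg _) (by linarith)
  · set m := (μ₁ + μ₂) / 2 with hm
    have step := main (Ici m) measurableSet_Ici
      (fun x hx => hcmp μ₁ μ₂ x (by simp only [mem_Ici] at hx; nlinarith))
      (fun x hx => hcmp μ₂ μ₁ x (by simp only [mem_Ici, not_le] at hx; nlinarith))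
    rw [htransIci μ₁ m, htransIci μ₂ m] at step
    have hd := hdiffIci (m - μ₁) (m - μ₂) (by linarith)
    have habs : |μ₁ - μ₂| = μ₁ - μ₂ := by rw [abs_of_nonneg (by linarith)]
    rw [habs, div_eq_mul_inv]
    have : m - μ₂ - (m - μ₁) = μ₁ - μ₂ := by ring
    rw [this] at hd
    linarith

lemma gauss_tv {σ : ℝ} (hσ : 0 < σ) (μ₁ μ₂ : ℝ) {B : Set ℝ} (hB : MeasurableSet B) :
    |(gaussianReal μ₁ ⟨σ ^ 2, sq_nonneg σ⟩ B).toReal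
      - (gaussianReal μ₂ ⟨σ ^ 2, sq_nonneg σ⟩ B).toReal| ≤ |μ₁ - μ₂| / (2 * σ) := by
  refine abs_sub_le_iff.2 ⟨gauss_one_sided hσ μ₁ μ₂ hB, ?_⟩
  have := gauss_one_sided hσ μ₂ μ₁ hB
  rwa [abs_sub_comm] at this

lemma lintegral_toReal_diff_bound {α : Type*} [MeasurableSpace α] (μ : Measure α)
    [IsProbabilityMeasure μ] {f g : α → ℝ≥0∞} (hf : Measurable f) (hg : Measurable g)
    (hf1 : ∀ x, f x ≤ 1) (hg1 : ∀ x, g x ≤ 1) {C : ℝ} (hC : 0 ≤ C)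
    (h : ∀ x, |(f x).toReal - (g x).toReal| ≤ C) :
    |(∫⁻ x, f x ∂μ).toReal - (∫⁻ x, g x ∂μ).toReal| ≤ C := by
  have key : ∀ (f g : α → ℝ≥0∞), Measurable g → (∀ x, f x ≤ 1) → (∀ x, g x ≤ 1) →
      (∀ x, (f x).toReal ≤ (g x).toReal + C) →
      (∫⁻ x, f x ∂μ).toReal ≤ (∫⁻ x, g x ∂μ).toReal + C := by
    intro f g hg hf1 hg1 hle
    have hpt : ∀ x, f x ≤ g x + ENNReal.ofReal C := by
      intro x
      have hfx : f x ≠ ⊤ := ((hf1 x).trans_lt ENNReal.one_lt_top).ne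
      have hgx : g x ≠ ⊤ := ((hg1 x).trans_lt ENNReal.one_lt_top).ne
      calc f x = ENNReal.ofReal (f x).toReal := (ENNReal.ofReal_toReal hfx).symm
        _ ≤ ENNReal.ofReal ((g x).toReal + C) := ENNReal.ofReal_le_ofReal (hle x)
        _ = ENNReal.ofReal (g x).toReal + ENNReal.ofReal C := by
            rw [ENNReal.ofReal_add ENNReal.toReal_nonneg hC]
        _ = g x + ENNReal.ofReal C := by rw [ENNReal.ofReal_toReal hgx]
    have hint : ∫⁻ x, f x ∂μ ≤ ∫⁻ x, g x ∂μ + ENNReal.ofReal C := by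
      calc ∫⁻ x, f x ∂μ ≤ ∫⁻ x, g x + ENNReal.ofReal C ∂μ := lintegral_mono hpt
        _ = ∫⁻ x, g x ∂μ + ENNReal.ofReal C := by
            rw [lintegral_add_right _ measurable_const, lintegral_const, measure_univ, mul_one]
    have hgtop : ∫⁻ x, g x ∂μ ≠ ⊤ := by
      refine ne_of_lt (lt_of_le_of_lt (lintegral_mono hg1) ?_)
      simp [lintegral_const]
    have := ENNReal.toReal_mono (by simp [hgtop, ENNReal.add_ne_top]) hint
    rwa [ENNReal.toReal_add hgtop ENNReal.ofReal_ne_top, ENNReal.toReal_ofReal hC] at this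
  have h1 := key f g hg hf1 hg1 (fun x => by have := h x; rw [abs_le] at this; linarith [this.2])
  have h2 := key g f hf hg1 hf1 (fun x => by have := h x; rw [abs_le] at this; linarith [this.1])
  rw [abs_le]
  constructor <;> linarith

lemma lintegral_pi_prod {n : ℕ} (μ : Measure ℝ) [SigmaFinite μ] (g : Fin n → ℝ → ℝ≥0∞)
    (hg : ∀ i, Measurable (g i)) :
    ∫⁻ x, ∏ i, g i (x i) ∂(Measure.pi fun _ : Fin n => μ) = ∏ i, ∫⁻ t, g i t ∂μ := by
  induction n with
  | zero => simp
  | succ n ih =>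
      have hmp := (measurePreserving_piFinSuccAbove (fun _ : Fin (n+1) => μ) 0).symm
      have hmeas : Measurable fun x : Fin (n+1) → ℝ => ∏ i, g i (x i) :=
        Finset.measurable_prod _ fun i _ => (hg i).comp (measurable_pi_apply i)
      rw [← hmp.lintegral_comp_emb (MeasurableEquiv.measurableEmbedding _) _]
      simp_rw [MeasurableEquiv.piFinSuccAbove_symm_apply, Fin.insertNthEquiv,
        Equiv.coe_fn_mk, Fin.prod_univ_succ, Fin.insertNth_zero]
      simp only [Fin.zero_succAbove, cast_eq, Function.comp_def, Fin.cons_zero, Fin.cons_succ]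
      rw [lintegral_prod_mul (f := g 0) (g := fun y : Fin n → ℝ => ∏ x : Fin n, g x.succ (y x))
        (hg 0).aemeasurable
        (Finset.measurable_prod _ fun j _ => (hg j.succ).comp (measurable_pi_apply j)).aemeasurable]
      rw [ih (fun j => g j.succ) (fun j => hg j.succ)]

lemma pi_gauss {v : NNReal} (hv : v ≠ 0) (d : ℕ) :
    Measure.pi (fun _ : Fin d => gaussianReal 0 v)
      = (volume : Measure (Fin d → ℝ)).withDensity fun x => ∏ i, gaussianPDF 0 v (x i) := by
  refine Measure.pi_eq fun s hs => ?_
  rw [withDensity_apply _ (MeasurableSet.univ_pi hs), ← lintegral_indicator (MeasurableSet.univ_pi hs)]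
  have hpt : ∀ x : Fin d → ℝ,
      (Set.univ.pi s).indicator (fun x => ∏ i, gaussianPDF 0 v (x i)) x
        = ∏ i, (s i).indicator (gaussianPDF 0 v) (x i) := by
    intro x
    by_cases hx : x ∈ Set.univ.pi s
    · rw [Set.indicator_of_mem hx]
      exact Finset.prod_congr rfl fun i _ =>
        (Set.indicator_of_mem (hx i (Set.mem_univ i)) _).symm
    · rw [Set.indicator_of_notMem hx]
      rw [Set.mem_univ_pi] at hx
      push_neg at hx
      obtain ⟨i, hi⟩ := hx
      exact (Finset.prod_eq_zero (Finset.mem_univ i) (Set.indicator_of_notMem hi _)).symm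
  have hvol : (volume : Measure (Fin d → ℝ)) = Measure.pi fun _ => volume := volume_pi
  simp_rw [hpt, hvol]
  rw [lintegral_pi_prod volume _ fun i => (measurable_gaussianPDF 0 v).indicator (hs i)]
  exact Finset.prod_congr rfl fun i _ => by
    rw [lintegral_indicator (hs i), ← gaussianReal_apply 0 hv (s i)]

lemma map_equiv_withDensity {α β : Type*} [MeasurableSpace α] [MeasurableSpace β] (e : α ≃ᵐ β)
    (μ : Measure α) (f : β → ℝ≥0∞) (hf : Measurable f) :
    Measure.map e (μ.withDensity fun a => f (e a)) = (Measure.map e μ).withDensity f := by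
  ext s hs
  rw [MeasurableEquiv.map_apply, withDensity_apply _ hs,
    withDensity_apply _ (e.measurable hs),
    setLIntegral_map hs hf e.measurable]

noncomputable def gphi (v : NNReal) (d : ℕ) : EuclideanSpace ℝ (Fin d) → ℝ≥0∞ :=
  fun y => ENNReal.ofReal ((Real.sqrt (2 * π * v))⁻¹ ^ d * rexp (-‖y‖ ^ 2 / (2 * v)))

lemma gphi_meas (v : NNReal) (d : ℕ) : Measurable (gphi v d) := by
  apply ENNReal.measurable_ofReal.comp
  apply Measurable.const_mul
  exact (Real.measurable_exp.comp ((measurable_norm.pow_const 2).neg.div_const _))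

lemma gphi_eq_prod {v : NNReal} (hv : v ≠ 0) (d : ℕ) (y : EuclideanSpace ℝ (Fin d)) :
    gphi v d y = ∏ i, gaussianPDF 0 v (y i) := by
  have hvpos : (0:ℝ) < v := lt_of_le_of_ne v.coe_nonneg (by exact_mod_cast hv.symm)
  rw [gphi]
  simp_rw [gaussianPDF, gaussianPDFReal, sub_zero]
  rw [← ENNReal.ofReal_prod_of_nonneg (fun i _ => by positivity)]
  congr 1
  rw [Finset.prod_mul_distrib, Finset.prod_const, ← Real.exp_sum, Finset.card_univ,
    Fintype.card_fin]
  congr 1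
  have hnorm : ‖y‖ ^ 2 = ∑ i, (y i) ^ 2 := by
    rw [EuclideanSpace.norm_eq, Real.sq_sqrt (Finset.sum_nonneg fun i _ => by positivity)]
    exact Finset.sum_congr rfl fun i _ => by rw [Real.norm_eq_abs, sq_abs]
  rw [hnorm, ← Finset.sum_neg_distrib, Finset.sum_div]

lemma gauss_euclid {v : NNReal} (hv : v ≠ 0) (d : ℕ) :
    Measure.map ((MeasurableEquiv.toLp 2 (Fin d → ℝ)).symm).symm
        (Measure.pi fun _ : Fin d => gaussianReal 0 v)
      = (volume : Measure (EuclideanSpace ℝ (Fin d))).withDensity (gphi v d) := by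
  have h1 : (Measure.pi fun _ : Fin d => gaussianReal 0 v)
      = (volume : Measure (Fin d → ℝ)).withDensity
          fun a => gphi v d (((MeasurableEquiv.toLp 2 (Fin d → ℝ)).symm).symm a) := by
    rw [pi_gauss hv d]
    congr 1
    funext a
    rw [gphi_eq_prod hv]
    rfl
  rw [h1, map_equiv_withDensity _ _ _ (gphi_meas v d),
    ((EuclideanSpace.volume_preserving_symm_measurableEquiv_toLp (Fin d)).symm _).map_eq]

lemma gauss_rot {v : NNReal} (hv : v ≠ 0) {d : ℕ}
    (R : EuclideanSpace ℝ (Fin d) ≃ₗᵢ[ℝ] EuclideanSpace ℝ (Fin d)) :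
    Measure.map R (Measure.map ((MeasurableEquiv.toLp 2 (Fin d → ℝ)).symm).symm
        (Measure.pi fun _ : Fin d => gaussianReal 0 v))
      = Measure.map ((MeasurableEquiv.toLp 2 (Fin d → ℝ)).symm).symm
          (Measure.pi fun _ : Fin d => gaussianReal 0 v) := by
  rw [gauss_euclid hv d]
  have hphi : (fun a => gphi v d (R a)) = gphi v d := by
    funext a
    simp only [gphi, R.norm_map]
  have key := map_equiv_withDensity R.toHomeomorph.toMeasurableEquiv volume (gphi v d)
    (gphi_meas v d)
  have hcoe : (⇑R.toHomeomorph.toMeasurableEquiv : EuclideanSpace ℝ (Fin d) → _) = ⇑R := rfl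
  rw [hcoe, hphi] at key
  rw [key, R.measurePreserving.map_eq]

lemma shift_single {σ : ℝ} (hσ : 0 < σ) {n : ℕ} (i : Fin (n + 1)) (c : ℝ)
    {U : Set (Fin (n + 1) → ℝ)} (hU : MeasurableSet U) :
    |((Measure.pi fun _ : Fin (n + 1) => gaussianReal 0 ⟨σ ^ 2, sq_nonneg σ⟩)
        ((fun x => Pi.single i c + x) ⁻¹' U)).toReal
      - ((Measure.pi fun _ : Fin (n + 1) => gaussianReal 0 ⟨σ ^ 2, sq_nonneg σ⟩) U).toReal|
      ≤ |c| / (2 * σ) := by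
  set v : NNReal := ⟨σ ^ 2, sq_nonneg σ⟩ with hv_def
  set γ := gaussianReal 0 v with hγ
  set G := Measure.pi fun _ : Fin (n + 1) => γ with hG
  set Gn := Measure.pi fun _ : Fin n => γ with hGn
  set e := MeasurableEquiv.piFinSuccAbove (fun _ : Fin (n + 1) => ℝ) i with he
  have hmp : MeasurePreserving e G (γ.prod Gn) :=
    measurePreserving_piFinSuccAbove (fun _ : Fin (n + 1) => γ) i
  have happ : ∀ V : Set (Fin (n + 1) → ℝ), MeasurableSet V →
      G V = (γ.prod Gn) (e.symm ⁻¹' V) := by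
    intro V hV
    rw [← hmp.map_eq, Measure.map_apply e.measurable (e.symm.measurable hV)]
    congr 1
    ext x
    simp
  have hadd : Measurable fun x : Fin (n + 1) → ℝ => Pi.single i c + x := by
    apply measurable_pi_iff.2
    intro j
    exact (measurable_pi_apply j).const_add _
  have hshift : ∀ (a : ℝ) (z : Fin n → ℝ),
      Pi.single i c + (e.symm (a, z)) = e.symm (c + a, z) := by
    intro a z
    have h1 : (e.symm (a, z) : Fin (n + 1) → ℝ) = i.insertNth a z := by
      simp [he, MeasurableEquiv.piFinSuccAbove_symm_apply, Fin.insertNthEquiv]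
    have h2 : (e.symm (c + a, z) : Fin (n + 1) → ℝ) = i.insertNth (c + a) z := by
      simp [he, MeasurableEquiv.piFinSuccAbove_symm_apply, Fin.insertNthEquiv]
    rw [h1, h2]
    funext j
    refine Fin.succAboveCases i ?_ ?_ j
    · simp [Fin.insertNth_apply_same]
    · intro k
      simp [Fin.insertNth_apply_succAbove, Pi.single_eq_of_ne (Fin.succAbove_ne i k)]
  set W := e.symm ⁻¹' U with hW_def
  have hW : MeasurableSet W := e.symm.measurable hU
  have h1 : G ((fun x => Pi.single i c + x) ⁻¹' U)
      = (γ.prod Gn) ((fun p : ℝ × (Fin n → ℝ) => (c + p.1, p.2)) ⁻¹' W) := by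
    rw [happ _ (hadd hU)]
    congr 1
    ext ⟨a, z⟩
    simp only [Set.mem_preimage, hW_def, hshift a z]
  have h2 : G U = (γ.prod Gn) W := happ U hU
  have hWs : MeasurableSet ((fun p : ℝ × (Fin n → ℝ) => (c + p.1, p.2)) ⁻¹' W) :=
    ((measurable_fst.const_add c).prodMk measurable_snd) hW
  rw [h1, h2, Measure.prod_apply_symm hWs, Measure.prod_apply_symm hW]
  have hpre : ∀ z : Fin n → ℝ,
      ((fun x : ℝ => (x, z)) ⁻¹' ((fun p : ℝ × (Fin n → ℝ) => (c + p.1, p.2)) ⁻¹' W))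
        = (fun x : ℝ => c + x) ⁻¹' ((fun x : ℝ => (x, z)) ⁻¹' W) := by
    intro z; ext x; simp
  have hγmap : ∀ z : Fin n → ℝ,
      γ ((fun x : ℝ => c + x) ⁻¹' ((fun x : ℝ => (x, z)) ⁻¹' W))
        = gaussianReal c v ((fun x : ℝ => (x, z)) ⁻¹' W) := by
    intro z
    have hm : MeasurableSet ((fun x : ℝ => (x, z)) ⁻¹' W) :=
      (measurable_id.prodMk measurable_const) hW
    have := gaussianReal_map_const_add (μ := 0) (v := v) c
    rw [zero_add] at this
    rw [← this, Measure.map_apply (measurable_const_add c) hm]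
  simp_rw [hpre, hγmap]
  apply lintegral_toReal_diff_bound Gn
    (measurable_measure_prodMk_right (μ := gaussianReal c v) hW)
    (measurable_measure_prodMk_right (μ := γ) hW)
    (fun z => prob_le_one) (fun z => prob_le_one)
    (div_nonneg (abs_nonneg c) (by linarith))
  intro z
  have := gauss_tv hσ (B := (fun x : ℝ => (x, z)) ⁻¹' W) c 0
    ((measurable_id.prodMk measurable_const) hW)
  rwa [sub_zero] at this

lemma shift_euclid {σ : ℝ} (hσ : 0 < σ) {d : ℕ} (Δ : EuclideanSpace ℝ (Fin d))
    {V : Set (EuclideanSpace ℝ (Fin d))} (hV : MeasurableSet V) :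
    |((Measure.map ((MeasurableEquiv.toLp 2 (Fin d → ℝ)).symm).symm
        (Measure.pi fun _ : Fin d => gaussianReal 0 ⟨σ ^ 2, sq_nonneg σ⟩))
          ((fun x => Δ + x) ⁻¹' V)).toReal
      - ((Measure.map ((MeasurableEquiv.toLp 2 (Fin d → ℝ)).symm).symm
        (Measure.pi fun _ : Fin d => gaussianReal 0 ⟨σ ^ 2, sq_nonneg σ⟩)) V).toReal|
      ≤ ‖Δ‖ / (2 * σ) := by
  set v : NNReal := ⟨σ ^ 2, sq_nonneg σ⟩ with hv_def
  have hv : v ≠ 0 := by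
    simp only [v, ne_eq, ← NNReal.coe_eq_zero]
    exact ne_of_gt (pow_pos hσ 2)
  by_cases hΔ : Δ = 0
  · simp [hΔ, norm_zero]
  rcases d with - | n
  · exact absurd (by ext i; exact i.elim0 : Δ = 0) hΔ
  set G' := Measure.map ((MeasurableEquiv.toLp 2 (Fin (n + 1) → ℝ)).symm).symm
    (Measure.pi fun _ : Fin (n + 1) => gaussianReal 0 v) with hG'
  have hc : 0 < ‖Δ‖ := norm_pos_iff.2 hΔ
  set c := ‖Δ‖ with hcdef
  set w : EuclideanSpace ℝ (Fin (n + 1)) := EuclideanSpace.single 0 c with hw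
  have hnw : ‖w‖ = ‖Δ‖ := by
    rw [hw, EuclideanSpace.norm_single, Real.norm_eq_abs, abs_of_pos hc]
  set R : EuclideanSpace ℝ (Fin (n + 1)) ≃ₗᵢ[ℝ] EuclideanSpace ℝ (Fin (n + 1)) :=
    (Submodule.reflection (ℝ ∙ (w - Δ))ᗮ) with hR
  have hRw : R w = Δ := Submodule.reflection_sub hnw
  have hRmeas : Measurable R := R.continuous.measurable
  have hrot := gauss_rot hv R
  rw [← hG'] at hrot
  have haddm : ∀ δ : EuclideanSpace ℝ (Fin (n + 1)),
      Measurable fun x : EuclideanSpace ℝ (Fin (n + 1)) => δ + x :=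
    fun δ => measurable_const_add δ
  have key : ∀ (T : Set (EuclideanSpace ℝ (Fin (n + 1)))), MeasurableSet T →
      G' ((fun x => Δ + x) ⁻¹' T) = G' ((fun x => w + x) ⁻¹' (R ⁻¹' T))
        ∧ G' T = G' (R ⁻¹' T) := by
    intro T hT
    constructor
    · conv_lhs => rw [← hrot]
      rw [Measure.map_apply hRmeas ((haddm Δ) hT)]
      congr 1
      ext x
      simp only [Set.mem_preimage, Set.preimage_setOf_eq]
      rw [map_add, hRw]
    · conv_lhs => rw [← hrot]
      rw [Measure.map_apply hRmeas hT]
  obtain ⟨k1, k2⟩ := key V hV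
  rw [k1, k2]
  -- transfer to the pi type
  set e := (MeasurableEquiv.toLp 2 (Fin (n + 1) → ℝ)).symm with he
  have happ : ∀ S : Set (EuclideanSpace ℝ (Fin (n + 1))), MeasurableSet S →
      G' S = (Measure.pi fun _ : Fin (n + 1) => gaussianReal 0 v) (⇑e.symm ⁻¹' S) := by
    intro S hS
    rw [hG', Measure.map_apply e.symm.measurable hS]
  have hVR : MeasurableSet (R ⁻¹' V) := hRmeas hV
  rw [happ _ ((haddm w) hVR), happ _ hVR]
  have hpre : ⇑e.symm ⁻¹' ((fun x => w + x) ⁻¹' (R ⁻¹' V))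
      = (fun x => Pi.single (0 : Fin (n + 1)) c + x) ⁻¹' (⇑e.symm ⁻¹' (R ⁻¹' V)) := rfl
  rw [hpre]
  have := shift_single hσ (0 : Fin (n + 1)) c (e.symm.measurable hVR)
  rwa [abs_of_pos hc] at this

lemma key_pi {σ : ℝ} (hσ : 0 < σ) {d : ℕ} (θ θ' : Fin d → ℝ) {S : Set (Fin d → ℝ)}
    (hS : MeasurableSet S) :
    |((Measure.pi fun _ : Fin d => gaussianReal 0 ⟨σ ^ 2, sq_nonneg σ⟩)
        ((fun ξ => θ + ξ) ⁻¹' S)).toReal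
      - ((Measure.pi fun _ : Fin d => gaussianReal 0 ⟨σ ^ 2, sq_nonneg σ⟩)
        ((fun ξ => θ' + ξ) ⁻¹' S)).toReal|
      ≤ Real.sqrt (∑ i, (θ i - θ' i) ^ 2) / (2 * σ) := by
  set v : NNReal := ⟨σ ^ 2, sq_nonneg σ⟩ with hv_def
  set G := Measure.pi fun _ : Fin d => gaussianReal 0 v with hG
  set T : Set (Fin d → ℝ) := (fun ξ => θ' + ξ) ⁻¹' S with hT_def
  have hTadd : Measurable fun ξ : Fin d → ℝ => θ' + ξ :=
    measurable_pi_iff.2 fun j => ((measurable_pi_apply j)).const_add _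
  have hT : MeasurableSet T := hTadd hS
  have h1 : (fun ξ => θ + ξ) ⁻¹' S = (fun ξ => (θ - θ') + ξ) ⁻¹' T := by
    ext ξ
    simp only [Set.mem_preimage, hT_def]
    have : θ' + (θ - θ' + ξ) = θ + ξ := by abel
    rw [this]
  have h2 : T = (fun ξ => (0 : Fin d → ℝ) + ξ) ⁻¹' T := by simp
  -- transfer to EuclideanSpace
  set e := (MeasurableEquiv.toLp 2 (Fin d → ℝ)).symm with he
  set V : Set (EuclideanSpace ℝ (Fin d)) := ⇑e ⁻¹' T with hV_def
  have hV : MeasurableSet V := e.measurable hT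
  have hVT : ⇑e.symm ⁻¹' V = T := by
    rw [hV_def, ← Set.preimage_comp]
    have : (⇑e ∘ ⇑e.symm) = id := by
      funext x; simp
    rw [this, Set.preimage_id]
  set Δ : EuclideanSpace ℝ (Fin d) := (EuclideanSpace.equiv (Fin d) ℝ).symm (θ - θ') with hΔ_def
  have hGmap : ∀ (δ : EuclideanSpace ℝ (Fin d)) (X : Set (EuclideanSpace ℝ (Fin d))),
      MeasurableSet X →
      (Measure.map (⇑e.symm) G) ((fun x => δ + x) ⁻¹' X)
        = G (⇑e.symm ⁻¹' ((fun x => δ + x) ⁻¹' X)) := by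
    intro δ X hX
    rw [Measure.map_apply e.symm.measurable ((measurable_const_add δ) hX)]
  have hshift1 : ⇑e.symm ⁻¹' ((fun x => Δ + x) ⁻¹' V) = (fun ξ => (θ - θ') + ξ) ⁻¹' T := rfl
  have hshift0 : ⇑e.symm ⁻¹' ((fun x => (0 : EuclideanSpace ℝ (Fin d)) + x) ⁻¹' V)
      = (fun ξ => (0 : Fin d → ℝ) + ξ) ⁻¹' T := rfl
  have hnorm : ‖Δ‖ = Real.sqrt (∑ i, (θ i - θ' i) ^ 2) := by
    rw [EuclideanSpace.norm_eq]
    congr 1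
    exact Finset.sum_congr rfl fun i _ => by
      rw [Real.norm_eq_abs, sq_abs]; rfl
  have hfinal := shift_euclid hσ Δ hV
  rw [hGmap Δ V hV, hshift1] at hfinal
  rw [Measure.map_apply e.symm.measurable hV, hVT] at hfinal
  rw [hnorm] at hfinal
  rw [h1]
  exact hfinal

/-- The general noisy-response distribution map: the pushforward of the base distribution
tensored with Gaussian perception noise N(0, σ²I_d) under ((x,y),ξ) ↦ (ρ(x, θ+ξ), y). -/
noncomputable def noisyMapGen {E : Type*} [MeasurableSpace E] {d : ℕ}
    (DB : Measure (E × Bool)) (ρ : E → (Fin d → ℝ) → E) (σ : ℝ) (θ : Fin d → ℝ) :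
    Measure (E × Bool) :=
  Measure.map (fun q : (E × Bool) × (Fin d → ℝ) => (ρ q.1.1 (θ + q.2), q.1.2))
    (DB.prod (Measure.pi fun _ : Fin d => gaussianReal 0 ⟨σ ^ 2, sq_nonneg σ⟩))

/-- Lemma 1 (the noisy-response distribution map is (1/(2σ))-Lipschitz in
total variation distance w.r.t. the Euclidean norm of the classifier weights). -/
theorem stmt13 {E : Type*} [MeasurableSpace E] {d : ℕ}
    (DB : Measure (E × Bool)) [IsProbabilityMeasure DB]
    (ρ : E → (Fin d → ℝ) → E)
    (hρ : Measurable fun q : E × (Fin d → ℝ) => ρ q.1 q.2)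
    (σ : ℝ) (hσ : 0 < σ) (θ θ' : Fin d → ℝ)
    (A : Set (E × Bool)) (hA : MeasurableSet A) :
    |(noisyMapGen DB ρ σ θ A).toReal - (noisyMapGen DB ρ σ θ' A).toReal| ≤
      Real.sqrt (∑ i, (θ i - θ' i) ^ 2) / (2 * σ) := by
  set v : NNReal := ⟨σ ^ 2, sq_nonneg σ⟩ with hv_def
  set N := Measure.pi fun _ : Fin d => gaussianReal 0 v with hN
  have hmap : ∀ ϑ : Fin d → ℝ,
      Measurable fun q : (E × Bool) × (Fin d → ℝ) => (ρ q.1.1 (ϑ + q.2), q.1.2) := by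
    intro ϑ
    have h2 : Measurable fun q : (E × Bool) × (Fin d → ℝ) => ϑ + q.2 :=
      measurable_pi_iff.2 fun j => ((measurable_pi_apply j).comp measurable_snd).const_add _
    exact (hρ.comp ((measurable_fst.fst).prodMk h2)).prodMk measurable_fst.snd
  rw [noisyMapGen, noisyMapGen, ← hv_def, Measure.map_apply (hmap θ) hA, Measure.map_apply (hmap θ') hA,
    Measure.prod_apply ((hmap θ) hA), Measure.prod_apply ((hmap θ') hA)]
  apply lintegral_toReal_diff_bound DB
    (measurable_measure_prodMk_left ((hmap θ) hA))
    (measurable_measure_prodMk_left ((hmap θ') hA))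
    (fun p => prob_le_one) (fun p => prob_le_one)
    (div_nonneg (Real.sqrt_nonneg _) (by linarith))
  intro p
  have hSp : MeasurableSet ((fun w => (ρ p.1 w, p.2)) ⁻¹' A) :=
    ((hρ.comp (measurable_const.prodMk measurable_id)).prodMk measurable_const) hA
  have hpre : ∀ ϑ : Fin d → ℝ,
      Prod.mk p ⁻¹' ((fun q : (E × Bool) × (Fin d → ℝ) => (ρ q.1.1 (ϑ + q.2), q.1.2)) ⁻¹' A)
        = (fun ξ => ϑ + ξ) ⁻¹' ((fun w => (ρ p.1 w, p.2)) ⁻¹' A) := fun ϑ => rfl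
  rw [hpre θ, hpre θ']
  exact key_pi hσ θ θ' hSp
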